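/- For k, m ≥ 2, the submonoid POI_n ∩ POI_{k×m} of POI_{k×m} (n = km) is isomorphic to POI_k, the monoid of order preserving partial injections on a k-element chain. -/
import Mathlib


noncomputable section

namespace POIPaper

instance pequivMonoid (α : Type*) : Monoid (α ≃. α) where
  one := PEquiv.refl α
  mul f g := f.trans g
  mul_assoc := PEquiv.trans_assoc
  one_mul := PEquiv.refl_trans
  mul_one := PEquiv.trans_refl

/-- `f` is `P`-stable for the ordered partition of `Ω` given by the block-index map `ι`. -/
def PStable {Ω : Type*} {k : ℕ} (ι : Ω → Fin k) (f : Ω ≃. Ω) : Prop :=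
  ∀ x y : Ω, y ∈ f x →
    (∀ z, ι z = ι x → (f z).isSome) ∧
    (∀ z w, w ∈ f z → ι z = ι x → ι w = ι y) ∧
    (∀ w, ι w = ι y → ∃ z, ι z = ι x ∧ w ∈ f z)

/-- `f` is `P`-order preserving for the ordered partition given by `ι`. -/
def POrdPres {Ω : Type*} {k : ℕ} (ι : Ω → Fin k) (f : Ω ≃. Ω) : Prop :=
  ∀ x y x' y' : Ω, x' ∈ f x → y' ∈ f y → ι x ≤ ι y → ι x' ≤ ι y'

/-- The set `POI(Ω,P)` of all `P`-stable and `P`-order preserving partial permutations. -/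
def POISet {Ω : Type*} {k : ℕ} (ι : Ω → Fin k) : Set (Ω ≃. Ω) :=
  {f | PStable ι f ∧ POrdPres ι f}

/-- Block index map of the uniform interval partition of `{1,...,km}` into `k` blocks of size `m`. -/
def blk (k m : ℕ) (a : Fin (k * m)) : Fin k :=
  ⟨(a : ℕ) / m, by
    have ha := a.isLt
    rcases Nat.eq_zero_or_pos m with h | h
    · subst h; simp at ha
    · rw [Nat.div_lt_iff_lt_mul h]; omega⟩

def toIdx (k m : ℕ) (p : Fin k × Fin m) : Fin (k * m) :=
  ⟨p.1 * m + p.2, by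
    have h1 := p.1.isLt; have h2 := p.2.isLt
    calc (p.1 : ℕ) * m + p.2 < (p.1 + 1) * m := by rw [add_mul, one_mul]; omega
    _ ≤ k * m := Nat.mul_le_mul_right _ (by omega)⟩

def res {k m : ℕ} (a : Fin (k * m)) : Fin m :=
  ⟨(a : ℕ) % m, by
    have ha := a.isLt
    rcases Nat.eq_zero_or_pos m with h | h
    · subst h; simp at ha
    · exact Nat.mod_lt _ h⟩

theorem blk_toIdx (k m : ℕ) (p : Fin k × Fin m) : blk k m (toIdx k m p) = p.1 := by
  have hm : 0 < m := p.2.pos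
  apply Fin.ext
  show ((p.1 : ℕ) * m + p.2) / m = p.1
  rw [mul_comm, Nat.mul_add_div hm, Nat.div_eq_of_lt p.2.isLt, add_zero]

theorem res_toIdx (k m : ℕ) (p : Fin k × Fin m) : res (toIdx k m p) = p.2 := by
  apply Fin.ext
  show ((p.1 : ℕ) * m + p.2) % m = p.2
  rw [mul_comm, Nat.mul_add_mod, Nat.mod_eq_of_lt p.2.isLt]

theorem toIdx_blk_res {k m : ℕ} (a : Fin (k * m)) : toIdx k m (blk k m a, res a) = a := by
  apply Fin.ext
  show ((a : ℕ) / m) * m + (a : ℕ) % m = a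
  rw [mul_comm]; exact Nat.div_add_mod _ _

theorem val_eq_blk_res {k m : ℕ} (a : Fin (k * m)) :
    (a : ℕ) = (blk k m a : ℕ) * m + (res a : ℕ) :=
  (congrArg Fin.val (toIdx_blk_res a)).symm

def psi (k m : ℕ) (θ : Fin k ≃. Fin k) : Fin (k * m) ≃. Fin (k * m) where
  toFun a := (θ (blk k m a)).map fun j => toIdx k m (j, res a)
  invFun b := (θ.symm (blk k m b)).map fun j => toIdx k m (j, res b)
  inv a b := by
    simp only [Option.mem_def, Option.map_eq_some_iff]
    constructor
    · rintro ⟨j, hj, rfl⟩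
      refine ⟨blk k m b, ?_, ?_⟩
      · rw [blk_toIdx]
        exact PEquiv.mem_iff_mem θ |>.mp hj
      · rw [res_toIdx]
        exact toIdx_blk_res b
    · rintro ⟨j, hj, rfl⟩
      refine ⟨blk k m a, ?_, ?_⟩
      · rw [blk_toIdx]
        exact PEquiv.mem_iff_mem θ |>.mpr hj
      · rw [res_toIdx]
        exact toIdx_blk_res a

theorem mem_psi {k m : ℕ} {θ : Fin k ≃. Fin k} {a b : Fin (k * m)} :
    b ∈ psi k m θ a ↔ ∃ j, j ∈ θ (blk k m a) ∧ b = toIdx k m (j, res a) := by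
  have : psi k m θ a = (θ (blk k m a)).map fun j => toIdx k m (j, res a) := rfl
  rw [Option.mem_def, this]
  cases h : θ (blk k m a) with
  | none => simp
  | some j => simp [eq_comm]

theorem psi_apply {k m : ℕ} (θ : Fin k ≃. Fin k) (a : Fin (k * m)) :
    psi k m θ a = (θ (blk k m a)).map fun j => toIdx k m (j, res a) := rfl

/-- The monoid `POI_{k×m}` (as a subset of the monoid of partial permutations). -/
def POIkm (k m : ℕ) : Set (Fin (k * m) ≃. Fin (k * m)) := POISet (blk k m)

/-- The cardinality of the image of a partial permutation. -/
def imCard {n : ℕ} (f : Fin n ≃. Fin n) : ℕ := Set.ncard {b | (f.symm b).isSome}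

/-- The `J`-preorder of the monoid `POI_{k×m}`: `α ≤_J β` iff `α ∈ M β M`. -/
def leJ (k m : ℕ) (α β : Fin (k * m) ≃. Fin (k * m)) : Prop :=
  ∃ s ∈ POIkm k m, ∃ t ∈ POIkm k m, α = s * β * t

/-- Order preserving partial permutations of a chain. -/
def OrdPres {n : ℕ} (f : Fin n ≃. Fin n) : Prop :=
  ∀ x y x' y' : Fin n, x' ∈ f x → y' ∈ f y → x ≤ y → x' ≤ y'

/-- The group of units of `POI_{k×m}`: elements with full domain and image. -/
def unitsSet (k m : ℕ) : Set (Fin (k * m) ≃. Fin (k * m)) :=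
  {f | f ∈ POIkm k m ∧ (∀ a, (f a).isSome) ∧ (∀ b, (f.symm b).isSome)}


theorem one_def (α : Type*) : (1 : α ≃. α) = PEquiv.refl α := rfl
theorem mul_apply {α : Type*} (f g : α ≃. α) (a : α) : (f * g) a = (f a).bind g := rfl

theorem psi_one (k m : ℕ) : psi k m 1 = 1 := by
  ext a
  rw [one_def, psi_apply, one_def]
  simp [PEquiv.refl_apply, toIdx_blk_res]

theorem psi_mul (k m : ℕ) (θ₁ θ₂ : Fin k ≃. Fin k) :
    psi k m (θ₁ * θ₂) = psi k m θ₁ * psi k m θ₂ := by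
  ext a
  rw [mul_apply, psi_apply, psi_apply, mul_apply]
  cases h : θ₁ (blk k m a) with
  | none => simp
  | some j =>
    simp only [Option.map_some, Option.bind_some, psi_apply, blk_toIdx, res_toIdx]

theorem psi_injective (k m : ℕ) (hm : 0 < m) : Function.Injective (psi k m) := by
  intro θ₁ θ₂ h
  apply PEquiv.ext
  intro i
  have := congrArg (fun f : Fin (k * m) ≃. Fin (k * m) => f (toIdx k m (i, ⟨0, hm⟩))) h
  simp only [psi_apply, blk_toIdx, res_toIdx] at this
  cases h1 : θ₁ i with
  | none =>
    cases h2 : θ₂ i with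
    | none => rfl
    | some j => rw [h1, h2] at this; simp at this
  | some j =>
    cases h2 : θ₂ i with
    | none => rw [h1, h2] at this; simp at this
    | some j' =>
      rw [h1, h2] at this
      simp only [Option.map_some, Option.some.injEq] at this
      have : (j : ℕ) * m + 0 = (j' : ℕ) * m + 0 := congrArg Fin.val this
      have : (j : ℕ) = j' := by
        have := Nat.eq_of_mul_eq_mul_right hm (by omega : (j : ℕ) * m = (j' : ℕ) * m)
        exact this
      rw [Fin.ext this]

theorem blk_mono {k m : ℕ} {a b : Fin (k * m)} (h : a ≤ b) : blk k m a ≤ blk k m b :=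
  Nat.div_le_div_right h

theorem toIdx_le_toIdx {k m : ℕ} {p q : Fin k × Fin m}
    (h : p.1 < q.1 ∨ (p.1 = q.1 ∧ p.2 ≤ q.2)) : toIdx k m p ≤ toIdx k m q := by
  rcases h with h | ⟨h1, h2⟩
  · show (p.1 : ℕ) * m + p.2 ≤ (q.1 : ℕ) * m + q.2
    have h2 := p.2.isLt
    have : ((p.1 : ℕ) + 1) * m ≤ (q.1 : ℕ) * m := Nat.mul_le_mul_right _ h
    rw [add_mul, one_mul] at this
    omega
  · show (p.1 : ℕ) * m + p.2 ≤ (q.1 : ℕ) * m + q.2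
    rw [h1]
    exact Nat.add_le_add_left h2 _

/-- forward direction: `psi θ` is order preserving when `θ` is. -/
theorem ordPres_psi {k m : ℕ} {θ : Fin k ≃. Fin k} (hθ : OrdPres θ) :
    OrdPres (psi k m θ) := by
  intro x y x' y' hx hy hxy
  rw [mem_psi] at hx hy
  obtain ⟨j, hj, rfl⟩ := hx
  obtain ⟨j', hj', rfl⟩ := hy
  rcases eq_or_lt_of_le (blk_mono hxy) with hb | hb
  · have : j = j' := by rw [hb] at hj; exact Option.mem_unique hj hj'
    apply toIdx_le_toIdx
    right
    refine ⟨this, ?_⟩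
    show (res x : ℕ) ≤ (res y : ℕ)
    have hx' := val_eq_blk_res x
    have hy' := val_eq_blk_res y
    have hb' : (blk k m x : ℕ) * m = (blk k m y : ℕ) * m := by
      rw [congrArg Fin.val hb]
    have hv : (x : ℕ) ≤ y := hxy
    omega
  · have hle : j ≤ j' := hθ _ _ _ _ hj hj' (le_of_lt hb)
    have hne : j ≠ j' := by
      rintro rfl
      have h1 : blk k m x ∈ θ.symm j := PEquiv.mem_iff_mem θ |>.mpr hj
      have h2 : blk k m y ∈ θ.symm j := PEquiv.mem_iff_mem θ |>.mpr hj'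
      exact absurd (Option.mem_unique h1 h2) (ne_of_lt hb)
    exact toIdx_le_toIdx (Or.inl (lt_of_le_of_ne hle hne))

theorem psi_mem_POIkm {k m : ℕ} {θ : Fin k ≃. Fin k} (hθ : OrdPres θ) :
    psi k m θ ∈ POIkm k m := by
  constructor
  · -- PStable
    intro x y hxy
    rw [mem_psi] at hxy
    obtain ⟨j, hj, rfl⟩ := hxy
    have hje : θ (blk k m x) = some j := hj
    refine ⟨?_, ?_, ?_⟩
    · intro z hz
      rw [psi_apply, hz, hje]
      simp
    · intro z w hw hz
      rw [mem_psi, hz] at hw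
      obtain ⟨j', hj', rfl⟩ := hw
      have hjj : j' = j := Option.mem_unique hj' hj
      rw [blk_toIdx, blk_toIdx, hjj]
    · intro w hw
      rw [blk_toIdx] at hw
      refine ⟨toIdx k m (blk k m x, res w), by rw [blk_toIdx], ?_⟩
      rw [mem_psi, blk_toIdx, res_toIdx]
      refine ⟨j, hj, ?_⟩
      have hw' : blk k m w = j := hw
      rw [show ((blk k m x, res w).2 : Fin m) = res w from rfl, ← hw', toIdx_blk_res]
  · -- POrdPres
    intro x y x' y' hx hy hxy
    rw [mem_psi] at hx hy
    obtain ⟨j, hj, rfl⟩ := hx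
    obtain ⟨j', hj', rfl⟩ := hy
    rw [blk_toIdx, blk_toIdx]
    exact hθ _ _ _ _ hj hj' hxy


theorem res_eq_of_mem {k m : ℕ} {f : Fin (k * m) ≃. Fin (k * m)} (hf : f ∈ POIkm k m)
    (hord : OrdPres f) {x y : Fin (k * m)} (hxy : y ∈ f x) : res y = res x := by
  obtain ⟨hst, _⟩ := hf
  obtain ⟨h1, h2, h3⟩ := hst x y hxy
  have hsome : ∀ r : Fin m, (f (toIdx k m (blk k m x, r))).isSome := fun r =>
    h1 _ (blk_toIdx k m _)
  set w : Fin m → Fin (k * m) := fun r => (f (toIdx k m (blk k m x, r))).get (hsome r) with hwdef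
  have hwmem : ∀ r, w r ∈ f (toIdx k m (blk k m x, r)) := fun r => Option.get_mem _
  have hwblk : ∀ r, blk k m (w r) = blk k m y := fun r =>
    h2 _ _ (hwmem r) (blk_toIdx k m _)
  set g : Fin m → Fin m := fun r => res (w r) with hgdef
  have hval : ∀ r, (w r : ℕ) = (blk k m y : ℕ) * m + g r := fun r => by
    have h := val_eq_blk_res (w r); rw [hwblk r] at h; exact h
  have hmono : StrictMono g := by
    intro r r' hrr
    have hle : w r ≤ w r' :=
      hord _ _ _ _ (hwmem r) (hwmem r') (toIdx_le_toIdx (Or.inr ⟨rfl, le_of_lt hrr⟩))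
    have hne : w r ≠ w r' := by
      intro hE
      have hEm : w r ∈ f (toIdx k m (blk k m x, r')) := hE ▸ hwmem r'
      have := PEquiv.inj f (hwmem r) hEm
      have : r = r' := by
        have := congrArg res this
        rwa [res_toIdx, res_toIdx] at this
      exact absurd this (ne_of_lt hrr)
    have hlt : (w r : ℕ) < (w r' : ℕ) :=
      lt_of_le_of_ne hle (fun hE => hne (Fin.ext hE))
    have hv1 := hval r
    have hv2 := hval r'
    show (g r : ℕ) < (g r' : ℕ)
    omega
  have hsurj : Function.Surjective g := by
    intro s
    obtain ⟨z, hz, hmem⟩ := h3 (toIdx k m (blk k m y, s)) (blk_toIdx k m _)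
    refine ⟨res z, ?_⟩
    have hz' : toIdx k m (blk k m x, res z) = z := by rw [← hz]; exact toIdx_blk_res z
    have hmem2 : w (res z) ∈ f z := by have h := hwmem (res z); rwa [hz'] at h
    have heq : w (res z) = toIdx k m (blk k m y, s) := Option.mem_unique hmem2 hmem
    show res (w (res z)) = s
    rw [heq, res_toIdx]
  have hid : ∀ r, g r = r := by
    intro r
    have hsub := Subsingleton.elim (StrictMono.orderIsoOfSurjective g hmono hsurj)
      (OrderIso.refl (Fin m))
    have hc : (StrictMono.orderIsoOfSurjective g hmono hsurj : Fin m → Fin m) = g :=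
      StrictMono.coe_orderIsoOfSurjective ..
    calc g r = StrictMono.orderIsoOfSurjective g hmono hsurj r := by rw [hc]
      _ = r := by rw [hsub]; rfl
  have hx' : toIdx k m (blk k m x, res x) = x := toIdx_blk_res x
  have hmemx : w (res x) ∈ f x := by have h := hwmem (res x); rwa [hx'] at h
  have hwy : w (res x) = y := Option.mem_unique hmemx hxy
  have := hid (res x)
  rw [hgdef] at this
  simp only at this
  rw [hwy] at this
  exact this


theorem exists_psi_eq {k m : ℕ} (hm : 0 < m) {f : Fin (k * m) ≃. Fin (k * m)}
    (hford : OrdPres f) (hfkm : f ∈ POIkm k m) :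
    ∃ θ : Fin k ≃. Fin k, OrdPres θ ∧ psi k m θ = f := by
  set z : Fin m := ⟨0, hm⟩ with hz
  have hres : ∀ {x y : Fin (k * m)}, y ∈ f x → res y = res x := fun h =>
    res_eq_of_mem hfkm hford h
  have hinv : ∀ (i : Fin k) (j : Fin k),
      j ∈ (f.symm (toIdx k m (j, z))).map (blk k m) → True := fun _ _ _ => trivial
  refine ⟨⟨fun i => (f (toIdx k m (i, z))).map (blk k m),
           fun j => (f.symm (toIdx k m (j, z))).map (blk k m), ?_⟩, ?_, ?_⟩
  · -- inv
    intro i j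
    simp only [Option.mem_def, Option.map_eq_some_iff]
    constructor
    · rintro ⟨x, hx, rfl⟩
      have hx' : toIdx k m (j, z) ∈ f x := PEquiv.mem_iff_mem f |>.mp hx
      have hrx : res x = z := by
        have h := hres hx'
        rw [res_toIdx] at h
        exact h.symm
      have hxe : x = toIdx k m (blk k m x, z) := by
        rw [← hrx]; exact (toIdx_blk_res x).symm
      refine ⟨toIdx k m (j, z), ?_, blk_toIdx k m _⟩
      rw [← hxe]; exact hx'
    · rintro ⟨y, hy, rfl⟩
      have hry : res y = z := by
        have h := hres hy
        rw [res_toIdx] at h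
        exact h
      have hye : y = toIdx k m (blk k m y, z) := by
        rw [← hry]; exact (toIdx_blk_res y).symm
      refine ⟨toIdx k m (i, z), ?_, blk_toIdx k m _⟩
      apply PEquiv.mem_iff_mem f |>.mpr
      rw [← hye]; exact hy
  · -- OrdPres θ
    intro i i' j j' hj hj' hle
    simp only [PEquiv.coe_mk_apply, Option.mem_def, Option.map_eq_some_iff] at hj hj'
    obtain ⟨y, hy, rfl⟩ := hj
    obtain ⟨y', hy', rfl⟩ := hj'
    have hle' : toIdx k m (i, z) ≤ toIdx k m (i', z) := by
      rcases lt_or_eq_of_le hle with h | h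
      · exact toIdx_le_toIdx (Or.inl h)
      · exact toIdx_le_toIdx (Or.inr ⟨h, le_refl _⟩)
    exact blk_mono (hford _ _ _ _ hy hy' hle')
  · -- psi θ = f
    apply PEquiv.ext
    intro a
    rw [psi_apply]
    cases hfa : f a with
    | none =>
      cases hfz : f (toIdx k m (blk k m a, z)) with
      | none =>
        show ((f (toIdx k m (blk k m a, z))).map (blk k m)).map _ = none
        rw [hfz]; rfl
      | some y =>
        exfalso
        obtain ⟨hst, _⟩ := hfkm
        obtain ⟨h1, _, _⟩ := hst _ y hfz
        have := h1 a (by rw [blk_toIdx])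
        rw [hfa] at this
        simp at this
    | some y =>
      obtain ⟨hst, _⟩ := hfkm
      obtain ⟨h1, h2, _⟩ := hst a y hfa
      have hsome := h1 (toIdx k m (blk k m a, z)) (blk_toIdx k m _)
      set w := (f (toIdx k m (blk k m a, z))).get hsome with hw
      have hwmem : w ∈ f (toIdx k m (blk k m a, z)) := Option.get_mem _
      have hwblk : blk k m w = blk k m y := h2 _ _ hwmem (blk_toIdx k m _)
      have hfz : f (toIdx k m (blk k m a, z)) = some w := hwmem
      show ((f (toIdx k m (blk k m a, z))).map (blk k m)).map (fun j => toIdx k m (j, res a)) = some y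
      rw [hfz]
      simp only [Option.map_some]
      congr 1
      rw [hwblk]
      have hry : res y = res a := hres hfa
      rw [← hry]
      exact toIdx_blk_res y

/-- for `k, m ≥ 2`, the submonoid `POI_n ∩ POI_{k×m}` of `POI_{k×m}` (`n = km`)
is isomorphic to `POI_k`. -/
theorem stmt12 (k m : ℕ) (hk : 2 ≤ k) (hm : 2 ≤ m) :
    ∃ ψ : (Fin k ≃. Fin k) → (Fin (k * m) ≃. Fin (k * m)),
      ψ 1 = 1 ∧
      (∀ θ₁ θ₂ : Fin k ≃. Fin k, OrdPres θ₁ → OrdPres θ₂ → ψ (θ₁ * θ₂) = ψ θ₁ * ψ θ₂) ∧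
      Set.InjOn ψ {θ | OrdPres θ} ∧
      ψ '' {θ | OrdPres θ} = {f | OrdPres f} ∩ POIkm k m := by
  refine ⟨psi k m, psi_one k m, fun θ₁ θ₂ _ _ => psi_mul k m θ₁ θ₂,
    (psi_injective k m (by omega)).injOn, ?_⟩
  apply Set.Subset.antisymm
  · rintro _ ⟨θ, hθ, rfl⟩
    exact ⟨ordPres_psi hθ, psi_mem_POIkm hθ⟩
  · rintro f ⟨hford, hfkm⟩
    obtain ⟨θ, hθ, hψ⟩ := exists_psi_eq (by omega : 0 < m) hford hfkm
    exact ⟨θ, hθ, hψ⟩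

end POIPaper
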